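/- arXiv:1707.00831 — 5 statements merged into one kernel-verified Lean document; each statement's English description precedes it below -/
import Mathlib

section
/- Let p be a prime and α ≥ 1 an integer such that either p is odd, or p = 2 and α ≥ 2. Then for every natural number n, p^{2α} divides f_p(p^α · n) − f_p(p^α)^n. -/
open Finset

/-- `fp p n` is the product of all integers `i` with `1 ≤ i ≤ n` and `p ∤ i`. -/
def fp (p n : ℕ) : ℕ := ∏ i ∈ (Finset.Icc 1 n).filter (fun i => ¬ p ∣ i), i

/-- Expansion of ∏ (c + g i) modulo c². -/
lemma prod_add_expand (c : ℤ) (g : ℕ → ℤ) (s : Finset ℕ) :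
    c ^ 2 ∣ (∏ i ∈ s, (c + g i)) - (∏ i ∈ s, g i)
      - c * ∑ i ∈ s, ∏ j ∈ s.erase i, g j := by
  classical
  induction s using Finset.induction_on with
  | empty => simp
  | @insert a t ha ih =>
    obtain ⟨k, hk⟩ := ih
    have hsum : ∑ i ∈ t, ∏ j ∈ (insert a t).erase i, g j
        = g a * ∑ i ∈ t, ∏ j ∈ t.erase i, g j := by
      rw [Finset.mul_sum]
      refine Finset.sum_congr rfl (fun i hi => ?_)
      have hai : a ≠ i := fun h => ha (h ▸ hi)
      rw [Finset.erase_insert_of_ne hai, Finset.prod_insert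
        (fun h => ha (Finset.mem_of_mem_erase h))]
    rw [Finset.prod_insert ha, Finset.prod_insert ha, Finset.sum_insert ha,
      Finset.erase_insert ha, hsum]
    have hprod : ∏ i ∈ t, (c + g i) = (∏ i ∈ t, g i)
        + c * (∑ i ∈ t, ∏ j ∈ t.erase i, g j) + c ^ 2 * k := by linarith [hk]
    refine ⟨∑ i ∈ t, ∏ j ∈ t.erase i, g j + (c + g a) * k, ?_⟩
    rw [hprod]; ring

/-- The sum of products over erased sets is divisible by `p^α`. -/
lemma sum_erase_dvd (p α : ℕ) (hp : p.Prime) (hα : 1 ≤ α)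
    (h : p ≠ 2 ∨ 2 ≤ α) :
    ((p : ℤ)) ^ α ∣ ∑ i ∈ (Finset.Icc 1 (p ^ α)).filter (fun i => ¬ p ∣ i),
      ∏ j ∈ ((Finset.Icc 1 (p ^ α)).filter (fun i => ¬ p ∣ i)).erase i, (j : ℤ) := by
  classical
  set P := p ^ α with hP
  set s := (Finset.Icc 1 P).filter (fun i => ¬ p ∣ i) with hs
  have hpP : p ∣ P := dvd_pow_self p (by omega)
  have hP1 : 1 < P := by
    have := hp.two_le
    calc 1 < p := by omega
    _ ≤ p ^ α := Nat.le_self_pow (by omega) p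
  -- work in ZMod P
  have hcast : ((p : ℤ)) ^ α = ((P : ℕ) : ℤ) := by push_cast [hP]; ring
  rw [hcast, ← ZMod.intCast_zmod_eq_zero_iff_dvd]
  push_cast
  -- membership facts
  have hmem : ∀ a ∈ s, 1 ≤ a ∧ a ≤ P ∧ ¬ p ∣ a := by
    intro a ha
    simp only [hs, Finset.mem_filter, Finset.mem_Icc] at ha
    tauto
  have hlt : ∀ a ∈ s, a < P := by
    intro a ha
    obtain ⟨h1, h2, h3⟩ := hmem a ha
    rcases Nat.lt_or_ge a P with h' | h'
    · exact h'
    · have : a = P := by omega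
      exact absurd (this ▸ hpP) h3
  have hgmem : ∀ a ∈ s, P - a ∈ s := by
    intro a ha
    obtain ⟨h1, h2, h3⟩ := hmem a ha
    have hlt' := hlt a ha
    simp only [hs, Finset.mem_filter, Finset.mem_Icc]
    refine ⟨⟨by omega, by omega⟩, fun hd => ?_⟩
    have : p ∣ P - (P - a) := Nat.dvd_sub hpP hd
    rw [show P - (P - a) = a by omega] at this
    exact h3 this
  refine Finset.sum_involution (fun a _ => P - a) ?_ ?_ hgmem (fun a ha =>
    Nat.sub_sub_self (le_of_lt (hlt a ha)))
  · -- F a + F (P - a) = 0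
    intro a ha
    have ha' : P - a ∈ s := hgmem a ha
    have hlt' := hlt a ha
    obtain ⟨h1, h2, h3⟩ := hmem a ha
    have e1 : (a : ZMod P) * ∏ j ∈ s.erase a, (j : ZMod P) = ∏ j ∈ s, (j : ZMod P) :=
      Finset.mul_prod_erase s _ ha
    have e2 : ((P - a : ℕ) : ZMod P) * ∏ j ∈ s.erase (P - a), (j : ZMod P)
        = ∏ j ∈ s, (j : ZMod P) := Finset.mul_prod_erase s _ ha'
    have hneg : ((P - a : ℕ) : ZMod P) = - (a : ZMod P) := by
      have : ((P - a : ℕ) : ZMod P) + (a : ZMod P) = 0 := by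
        rw [← Nat.cast_add, show P - a + a = P by omega]
        exact ZMod.natCast_self P
      linear_combination this
    rw [hneg] at e2
    have hunit : IsUnit (a : ZMod P) := by
      rw [ZMod.isUnit_iff_coprime]
      exact Nat.Coprime.pow_right α (Nat.Coprime.symm (hp.coprime_iff_not_dvd.mpr h3))
    have key : (a : ZMod P) * (∏ j ∈ s.erase a, (j : ZMod P)
        + ∏ j ∈ s.erase (P - a), (j : ZMod P)) = 0 := by
      rw [mul_add, e1, ← e2]; ring
    exact (IsUnit.mul_right_eq_zero hunit).mp key
  · -- P - a ≠ a
    intro a ha _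
    obtain ⟨h1, h2, h3⟩ := hmem a ha
    have hlt' := hlt a ha
    intro heq
    have heq' : P - a = a := heq
    have h2a : 2 * a = P := by omega
    rcases h with hodd | hα2
    · have : p ∣ 2 * a := h2a ▸ hpP
      rcases (Nat.Prime.dvd_mul hp).mp this with hd | hd
      · exact absurd ((Nat.prime_dvd_prime_iff_eq hp Nat.prime_two).mp hd) hodd
      · exact h3 hd
    ·
      have : p ∣ 2 * a := h2a ▸ hpP
      rcases (Nat.Prime.dvd_mul hp).mp this with hd | hd
      · -- p ∣ 2 so p = 2
        have hp2 : p = 2 := ((Nat.prime_dvd_prime_iff_eq hp Nat.prime_two).mp hd)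
        subst hp2
        -- 2 * a = 2 ^ α with α ≥ 2 forces 2 ∣ a
        have : a = 2 ^ (α - 1) := by
          have : 2 * a = 2 * 2 ^ (α - 1) := by
            rw [h2a, hP, ← pow_succ']
            congr 1
            omega
          omega
        apply h3
        rw [this]
        exact dvd_pow_self 2 (by omega)
      · exact h3 hd

lemma fp_mul_succ (p α n : ℕ) (hp : p.Prime) (hα : 1 ≤ α) :
    fp p (p ^ α * (n + 1)) = fp p (p ^ α * n)
      * ∏ i ∈ (Finset.Icc 1 (p ^ α)).filter (fun i => ¬ p ∣ i), (p ^ α * n + i) := by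
  classical
  set P := p ^ α with hP
  have hpP : p ∣ P := dvd_pow_self p (by omega)
  have key : Finset.Icc 1 (P * (n + 1)) = Finset.Icc 1 (P * n) ∪ Finset.Ioc (P * n) (P * n + P) := by
    have hpn : P * (n + 1) = P * n + P := by ring
    rw [hpn]
    ext x
    simp only [Finset.mem_Icc, Finset.mem_union, Finset.mem_Ioc]
    omega
  unfold fp
  rw [key, Finset.filter_union, Finset.prod_union]
  · congr 1
    refine Finset.prod_nbij' (fun i => i - P * n) (fun i => P * n + i) ?_ ?_ ?_ ?_ ?_
    · intro a ha
      simp only [Finset.mem_filter, Finset.mem_Ioc] at ha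
      simp only [Finset.mem_filter, Finset.mem_Icc]
      obtain ⟨⟨h1, h2⟩, h3⟩ := ha
      refine ⟨⟨by omega, by omega⟩, fun hd => h3 ?_⟩
      have hPn : p ∣ P * n := Dvd.dvd.mul_right hpP n
      have := Nat.dvd_add hPn hd
      rwa [Nat.add_sub_cancel' (le_of_lt h1)] at this
    · intro a ha
      simp only [Finset.mem_filter, Finset.mem_Icc] at ha
      simp only [Finset.mem_filter, Finset.mem_Ioc]
      obtain ⟨⟨h1, h2⟩, h3⟩ := ha
      refine ⟨⟨by omega, by omega⟩, fun hd => h3 ?_⟩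
      have hPn : p ∣ P * n := Dvd.dvd.mul_right hpP n
      have := Nat.dvd_sub hd hPn
      rwa [Nat.add_sub_cancel_left] at this
    · intro a ha
      simp only [Finset.mem_filter, Finset.mem_Ioc] at ha
      show P * n + (a - P * n) = a
      omega
    · intro a ha
      show P * n + a - P * n = a
      omega
    · intro a ha
      simp only [Finset.mem_filter, Finset.mem_Ioc] at ha
      show a = P * n + (a - P * n)
      omega
  · apply Finset.disjoint_filter_filter
    rw [Finset.disjoint_left]
    intro x hx hy
    simp only [Finset.mem_Icc, Finset.mem_Ioc] at hx hy
    omega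

lemma block_dvd (p α : ℕ) (hp : p.Prime) (hα : 1 ≤ α) (h : p ≠ 2 ∨ 2 ≤ α)
    (c : ℤ) (hc : (p : ℤ) ^ α ∣ c) :
    (p : ℤ) ^ (2 * α) ∣
      (∏ i ∈ (Finset.Icc 1 (p ^ α)).filter (fun i => ¬ p ∣ i), (c + (i : ℤ)))
      - ∏ i ∈ (Finset.Icc 1 (p ^ α)).filter (fun i => ¬ p ∣ i), (i : ℤ) := by
  obtain ⟨S, hS⟩ := sum_erase_dvd p α hp hα h
  obtain ⟨k, hk⟩ := prod_add_expand c (fun i => (i : ℤ))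
    ((Finset.Icc 1 (p ^ α)).filter (fun i => ¬ p ∣ i))
  obtain ⟨d, hd⟩ := hc
  refine ⟨d ^ 2 * k + d * S, ?_⟩
  have hpow : (p : ℤ) ^ (2 * α) = ((p : ℤ) ^ α) ^ 2 := by
    rw [mul_comm, pow_mul]
  have e : (∏ i ∈ (Finset.Icc 1 (p ^ α)).filter (fun i => ¬ p ∣ i), (c + (i : ℤ)))
      - ∏ i ∈ (Finset.Icc 1 (p ^ α)).filter (fun i => ¬ p ∣ i), (i : ℤ)
      = c ^ 2 * k + c * ∑ i ∈ (Finset.Icc 1 (p ^ α)).filter (fun i => ¬ p ∣ i),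
          ∏ j ∈ ((Finset.Icc 1 (p ^ α)).filter (fun i => ¬ p ∣ i)).erase i, (j : ℤ) := by
    linarith [hk]
  rw [hpow, e, hS, hd]
  ring

theorem fp_pow_dvd (p α : ℕ) (hp : p.Prime) (hα : 1 ≤ α)
    (h : p ≠ 2 ∨ 2 ≤ α) (n : ℕ) :
    (p : ℤ) ^ (2 * α) ∣ (fp p (p ^ α * n) : ℤ) - (fp p (p ^ α) : ℤ) ^ n := by
  induction n with
  | zero => simp [fp]
  | succ n ih =>
    have hF : (fp p (p ^ α) : ℤ)
        = ∏ i ∈ (Finset.Icc 1 (p ^ α)).filter (fun i => ¬ p ∣ i), (i : ℤ) := by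
      unfold fp; push_cast; rfl
    have hcast : (fp p (p ^ α * (n + 1)) : ℤ) = (fp p (p ^ α * n) : ℤ)
        * ∏ i ∈ (Finset.Icc 1 (p ^ α)).filter (fun i => ¬ p ∣ i),
            ((p : ℤ) ^ α * n + (i : ℤ)) := by
      rw [fp_mul_succ p α n hp hα]
      push_cast
      rfl
    have hblock := block_dvd p α hp hα h ((p : ℤ) ^ α * n) (dvd_mul_right _ _)
    rw [← hF] at hblock
    obtain ⟨k1, hk1⟩ := hblock
    obtain ⟨k2, hk2⟩ := ih
    refine ⟨(fp p (p ^ α * n) : ℤ) * k1 + (fp p (p ^ α) : ℤ) * k2, ?_⟩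
    rw [hcast, pow_succ]
    linear_combination ((fp p (p ^ α * n) : ℤ)) * hk1 + (fp p (p ^ α) : ℤ) * hk2
end

section
/- Let p be a prime and α ≥ 1 an integer such that either p is odd, or p = 2 and α ≥ 2. Then for every integer n ≥ 1, p^{2α} divides f_p(p^α · n) − f_p(p^α · (n−1)) · f_p(p^α). -/
open Finset

/-- Expansion of `∏ (c + j)` to first order in `c`. -/
lemma fp_aux_expand (s : Finset ℕ) (c : ℤ) :
    c ^ 2 ∣ (∏ j ∈ s, (c + (j : ℤ))) -
      ((∏ j ∈ s, (j : ℤ)) + c * ∑ j ∈ s, ∏ k ∈ s.erase j, (k : ℤ)) := by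
  classical
  induction s using Finset.induction with
  | empty => simp
  | @insert a s ha ih =>
    have herase : ∑ j ∈ (insert a s), ∏ k ∈ (insert a s).erase j, (k : ℤ)
        = (∏ k ∈ s, (k : ℤ)) + (a : ℤ) * ∑ j ∈ s, ∏ k ∈ s.erase j, (k : ℤ) := by
      rw [Finset.sum_insert ha, Finset.erase_insert ha, Finset.mul_sum]
      congr 1
      apply Finset.sum_congr rfl
      intro j hj
      have hja : j ≠ a := fun hh => ha (hh ▸ hj)
      rw [Finset.erase_insert_of_ne hja.symm,
        Finset.prod_insert (fun hh => ha (Finset.mem_of_mem_erase hh))]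
    rw [Finset.prod_insert ha, Finset.prod_insert ha, herase]
    obtain ⟨d, hd⟩ := ih
    have : (c + (a:ℤ)) * ∏ j ∈ s, (c + (j : ℤ)) -
        ((a : ℤ) * ∏ j ∈ s, (j:ℤ) + c * ((∏ k ∈ s, (k : ℤ)) +
          (a : ℤ) * ∑ j ∈ s, ∏ k ∈ s.erase j, (k : ℤ)))
        = (c + a) * (c^2 * d) + c^2 * ∑ j ∈ s, ∏ k ∈ s.erase j, (k : ℤ) := by
      rw [← hd]; ring
    rw [this]
    exact dvd_add (Dvd.dvd.mul_left (dvd_mul_right _ _) _) (dvd_mul_right _ _)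

theorem fp_inductive_step (p α : ℕ) (hp : p.Prime) (hα : 1 ≤ α)
    (h : p ≠ 2 ∨ 2 ≤ α) (n : ℕ) (hn : 1 ≤ n) :
    (p : ℤ) ^ (2 * α) ∣
      (fp p (p ^ α * n) : ℤ) - (fp p (p ^ α * (n - 1)) : ℤ) * (fp p (p ^ α) : ℤ) := by
  classical
  set m := p ^ α with hm
  set c := m * (n - 1) with hc
  set S : Finset ℕ := (Finset.Icc 1 m).filter (fun i => ¬ p ∣ i) with hS
  have hpm : p ∣ m := dvd_pow_self p (by omega)
  have hpc : p ∣ c := hpm.mul_right _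
  -- members of S
  have hmemS : ∀ j ∈ S, 1 ≤ j ∧ j ≤ m ∧ ¬ p ∣ j := by
    intro j hj
    simp only [hS, Finset.mem_filter, Finset.mem_Icc] at hj
    tauto
  -- Step 1: split the product
  have hmn : m * n = c + m := by
    rw [hc]; cases n with
    | zero => omega
    | succ k => simp [Nat.succ_sub_one, Nat.mul_succ]
  have hsplit : fp p (m * n) = fp p c * ∏ j ∈ S, (c + j) := by
    rw [hmn]
    unfold fp
    have h1 : ∀ x : ℕ, Finset.Icc 1 x = Finset.Ioc 0 x := by
      intro x; ext i; simp [Nat.lt_iff_add_one_le]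
    rw [h1, h1]
    have h2 : Finset.Ioc 0 (c + m) = Finset.Ioc 0 c ∪ Finset.Ioc c (c + m) :=
      (Finset.Ioc_union_Ioc_eq_Ioc (Nat.zero_le c) (Nat.le_add_right c m)).symm
    rw [h2, Finset.filter_union, Finset.prod_union]
    · congr 1
      refine Finset.prod_nbij' (fun i => i - c) (fun j => c + j) ?_ ?_ ?_ ?_ ?_
      · intro i hi
        simp only [Finset.mem_filter, Finset.mem_Ioc] at hi
        simp only [hS, Finset.mem_filter, Finset.mem_Icc]
        refine ⟨⟨by omega, by omega⟩, ?_⟩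
        intro hdvd
        exact hi.2 (by
          have : p ∣ c + (i - c) := dvd_add hpc hdvd
          rwa [Nat.add_sub_cancel' (le_of_lt hi.1.1)] at this)
      · intro j hj
        obtain ⟨hj1, hj2, hj3⟩ := hmemS j hj
        simp only [Finset.mem_filter, Finset.mem_Ioc]
        refine ⟨⟨by omega, by omega⟩, ?_⟩
        intro hdvd
        exact hj3 ((Nat.dvd_add_right hpc).mp hdvd)
      · intro i hi
        simp only [Finset.mem_filter, Finset.mem_Ioc] at hi
        omega
      · intro j _; omega
      · intro i hi
        simp only [Finset.mem_filter, Finset.mem_Ioc] at hi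
        omega
    · apply Finset.disjoint_filter_filter
      rw [Finset.disjoint_left]
      intro x hx hx'
      simp only [Finset.mem_Ioc] at hx hx'
      omega
  -- Step 3: divisibility of the derivative term
  have hstep3 : (m : ℤ) ∣ ∑ j ∈ S, ∏ k ∈ S.erase j, (k : ℤ) := by
    have hm1 : 1 < m := by
      have := hp.one_lt
      calc 1 < p := this
      _ ≤ p ^ α := Nat.le_self_pow (by omega) p
    haveI : NeZero m := ⟨by omega⟩
    rw [← ZMod.intCast_zmod_eq_zero_iff_dvd]
    push_cast
    refine Finset.sum_involution (fun j _ => m - j) ?_ ?_ ?_ ?_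
    · -- paired terms cancel
      intro j hj
      obtain ⟨hj1, hj2, hj3⟩ := hmemS j hj
      have hjm : j ≠ m := fun hh => hj3 (hh ▸ hpm)
      have hmem' : m - j ∈ S := by
        simp only [hS, Finset.mem_filter, Finset.mem_Icc]
        refine ⟨⟨by omega, by omega⟩, ?_⟩
        intro hdvd
        exact hj3 (by
          have : p ∣ m - (m - j) := Nat.dvd_sub hpm hdvd
          rwa [Nat.sub_sub_self hj2] at this)
      -- cast of m - j is -j
      have hcast : ((m - j : ℕ) : ZMod m) = - (j : ZMod m) := by
        have : ((m - j : ℕ) : ZMod m) = (m : ZMod m) - (j : ZMod m) := by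
          rw [Nat.cast_sub hj2]
        rw [this, ZMod.natCast_self, zero_sub]
      -- j is a unit
      have hcop : Nat.Coprime j m := (Nat.Prime.coprime_iff_not_dvd hp).mpr hj3 |>.symm.pow_right α
      have hu : IsUnit ((j : ZMod m)) := by
        rw [ZMod.isUnit_iff_coprime]; exact hcop
      have key : (j : ZMod m) * ((∏ k ∈ S.erase j, (k : ZMod m)) +
          ∏ k ∈ S.erase (m - j), (k : ZMod m)) = 0 := by
        rw [mul_add, Finset.mul_prod_erase _ _ hj]
        have h2 : (j : ZMod m) * ∏ k ∈ S.erase (m - j), (k : ZMod m)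
            = - (((m - j : ℕ) : ZMod m) * ∏ k ∈ S.erase (m - j), (k : ZMod m)) := by
          rw [hcast]; ring
        rw [h2, Finset.mul_prod_erase _ _ hmem']
        ring
      have h0 := hu.mul_right_eq_zero.mp key
      simpa using h0
    · -- no fixed points
      intro j hj _
      obtain ⟨hj1, hj2, hj3⟩ := hmemS j hj
      intro hfix
      have h2j : 2 * j = m := by omega
      rcases h with hodd | hα2
      · -- p odd : p ∣ m = 2j, p ≠ 2 so p ∣ j
        have hpd : p ∣ 2 * j := h2j ▸ hpm
        rcases (Nat.Prime.dvd_mul hp).mp hpd with h2 | hjj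
        · exact hodd ((Nat.prime_dvd_prime_iff_eq hp Nat.prime_two).mp h2)
        · exact hj3 hjj
      · -- p = 2? no: any p, α ≥ 2 : p^2 ∣ m = 2j... only works for p = 2
        by_cases hp2 : p = 2
        · subst hp2
          -- m = 2^α, 2j = 2^α, j = 2^(α-1), 2 ∣ j since α ≥ 2
          have : j = 2 ^ (α - 1) := by
            have : 2 * j = 2 ^ α := by rw [h2j, hm]
            have h2 : 2 ^ α = 2 * 2 ^ (α - 1) := by
              rw [← pow_succ']
              congr 1; omega
            omega
          apply hj3
          rw [this]
          exact dvd_pow_self 2 (by omega)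
        · have hpd : p ∣ 2 * j := h2j ▸ hpm
          rcases (Nat.Prime.dvd_mul hp).mp hpd with h2 | hjj
          · exact hp2 ((Nat.prime_dvd_prime_iff_eq hp Nat.prime_two).mp h2)
          · exact hj3 hjj
    · -- maps into S
      intro j hj
      obtain ⟨hj1, hj2, hj3⟩ := hmemS j hj
      have hjm : j ≠ m := fun hh => hj3 (hh ▸ hpm)
      simp only [hS, Finset.mem_filter, Finset.mem_Icc]
      refine ⟨⟨by omega, by omega⟩, ?_⟩
      intro hdvd
      exact hj3 (by
        have : p ∣ m - (m - j) := Nat.dvd_sub hpm hdvd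
        rwa [Nat.sub_sub_self hj2] at this)
    · -- involutive
      intro j hj
      obtain ⟨hj1, hj2, hj3⟩ := hmemS j hj
      show m - (m - j) = j
      omega
  -- assemble
  obtain ⟨d, hd⟩ := fp_aux_expand S (c : ℤ)
  obtain ⟨e, he⟩ := hstep3
  have hfpm : (fp p m : ℤ) = ∏ j ∈ S, (j : ℤ) := by
    unfold fp; push_cast; rfl
  have hfpmn : (fp p (m * n) : ℤ) = (fp p c : ℤ) * ∏ j ∈ S, ((c : ℤ) + (j : ℤ)) := by
    rw [hsplit]; push_cast; ring
  have hppow : ((p : ℤ)) ^ (2 * α) = (m : ℤ) ^ 2 := by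
    rw [hm]; push_cast; rw [← pow_mul, mul_comm α 2]
  have hcm : (c : ℤ) = (m : ℤ) * ((n : ℤ) - 1) := by
    rw [hc]; push_cast [Nat.cast_sub hn]; ring
  have hexp : (∏ j ∈ S, ((c:ℤ) + (j:ℤ)))
      = (∏ j ∈ S, (j:ℤ)) + (c:ℤ) * ((m:ℤ) * e) + (c:ℤ)^2 * d := by
    rw [← he]; linarith [hd]
  rw [hppow, hfpmn, hfpm]
  refine ⟨(fp p c : ℤ) * (((n:ℤ)-1) * e + ((n:ℤ)-1)^2 * d), ?_⟩
  rw [hexp, hcm]; ring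
end

section
/- Let p be a prime, n ≥ 1 an integer with p ∣ n, and τ ≥ 0 an integer. Then C((τ+1)n − 1, n − 1) · f_p(τn) · f_p(n) = C((τ+1)·(n/p) − 1, n/p − 1) · f_p((τ+1)n), where C(a,b) denotes the binomial coefficient. -/
lemma prod_Icc_one_eq_factorial (n : ℕ) : ∏ i ∈ Finset.Icc 1 n, i = n.factorial := by
  induction n with
  | zero => simp
  | succ k ih =>
    rw [Finset.prod_Icc_succ_top (by omega), ih, Nat.factorial_succ, mul_comm]

lemma fp_mul (p : ℕ) (hp : 0 < p) (m : ℕ) :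
    fp p (p * m) * (p ^ m * m.factorial) = (p * m).factorial := by
  have himg : (Finset.Icc 1 (p*m)).filter (fun i => p ∣ i)
      = Finset.image (fun j => p * j) (Finset.Icc 1 m) := by
    ext i
    simp only [Finset.mem_filter, Finset.mem_Icc, Finset.mem_image]
    constructor
    · rintro ⟨⟨h1, h2⟩, j, rfl⟩
      exact ⟨j, ⟨Nat.pos_of_ne_zero (by rintro rfl; simp at h1), Nat.le_of_mul_le_mul_left h2 hp⟩, rfl⟩
    · rintro ⟨j, ⟨hj1, hj2⟩, rfl⟩
      exact ⟨⟨by nlinarith, Nat.mul_le_mul_left p hj2⟩, j, rfl⟩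
  have hdvd : ∏ i ∈ (Finset.Icc 1 (p*m)).filter (fun i => p ∣ i), i
      = p ^ m * m.factorial := by
    rw [himg, Finset.prod_image (fun x _ y _ h => by
      exact Nat.eq_of_mul_eq_mul_left hp h)]
    rw [Finset.prod_mul_distrib, Finset.prod_const, Nat.card_Icc,
      prod_Icc_one_eq_factorial]
    simp
  have := Finset.prod_filter_mul_prod_filter_not (Finset.Icc 1 (p*m))
    (fun i => ¬ p ∣ i) (fun i => i)
  simp only [not_not] at this
  rw [fp, ← hdvd, this, prod_Icc_one_eq_factorial]

theorem choose_mul_fp_eq (p n τ : ℕ) (hp : p.Prime) (hn : 1 ≤ n) (hpn : p ∣ n) :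
    Nat.choose ((τ + 1) * n - 1) (n - 1) * fp p (τ * n) * fp p n =
      Nat.choose ((τ + 1) * (n / p) - 1) (n / p - 1) * fp p ((τ + 1) * n) := by
  have hp0 := hp.pos
  obtain ⟨m, rfl⟩ := hpn
  have hm : 0 < m := by
    rcases Nat.eq_zero_or_pos m with h | h
    · subst h; simp at hn
    · exact h
  have hdiv : p * m / p = m := Nat.mul_div_cancel_left m hp0
  rw [hdiv]
  have eN : (τ + 1) * (p * m) - 1 = τ * (p * m) + (p * m - 1) := by
    rw [show (τ + 1) * (p * m) = τ * (p * m) + p * m from by ring, Nat.add_sub_assoc hn]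
  have em : (τ + 1) * m - 1 = τ * m + (m - 1) := by
    rw [show (τ + 1) * m = τ * m + m from by ring, Nat.add_sub_assoc hm]
  rw [eN, em]
  have h1 := Nat.add_choose_mul_factorial_mul_factorial (τ * (p * m)) (p * m - 1)
  have h2 := Nat.add_choose_mul_factorial_mul_factorial (τ * m) (m - 1)
  have h3 := fp_mul p hp0 m
  have h4 : fp p (τ * (p * m)) * (p ^ (τ * m) * (τ * m).factorial)
      = (τ * (p * m)).factorial := by
    have := fp_mul p hp0 (τ * m)
    rwa [show p * (τ * m) = τ * (p * m) from by ring] at this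
  have h5 : fp p ((τ + 1) * (p * m)) * (p ^ ((τ + 1) * m) * ((τ + 1) * m).factorial)
      = ((τ + 1) * (p * m)).factorial := by
    have := fp_mul p hp0 ((τ + 1) * m)
    rwa [show p * ((τ + 1) * m) = (τ + 1) * (p * m) from by ring] at this
  have h6 : p * m * (p * m - 1).factorial = (p * m).factorial := Nat.mul_factorial_pred (by omega)
  have h7 : m * (m - 1).factorial = m.factorial := Nat.mul_factorial_pred hm.ne'
  have h8 : (τ + 1) * (p * m) * (τ * (p * m) + (p * m - 1)).factorial
      = ((τ + 1) * (p * m)).factorial := by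
    rw [← eN]; exact Nat.mul_factorial_pred (by positivity)
  have h9 : (τ + 1) * m * (τ * m + (m - 1)).factorial = ((τ + 1) * m).factorial := by
    rw [← em]; exact Nat.mul_factorial_pred (by positivity)
  qify at h1 h2 h3 h4 h5 h6 h7 h8 h9 ⊢
  have fne : ∀ k : ℕ, ((k.factorial : ℚ)) ≠ 0 := fun k =>
    Nat.cast_ne_zero.2 k.factorial_ne_zero
  have pne : ∀ k : ℕ, ((p : ℚ)) ^ k ≠ 0 := fun k =>
    pow_ne_zero _ (Nat.cast_ne_zero.2 hp0.ne')
  have hc1 : ((Nat.choose (τ * (p * m) + (p * m - 1)) (p * m - 1)) : ℚ)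
      = ((τ * (p * m) + (p * m - 1)).factorial : ℚ)
        / (((τ * (p * m)).factorial : ℚ) * ((p * m - 1).factorial : ℚ)) := by
    field_simp
    linear_combination h1
  have hc2 : ((Nat.choose (τ * m + (m - 1)) (m - 1)) : ℚ)
      = ((τ * m + (m - 1)).factorial : ℚ)
        / (((τ * m).factorial : ℚ) * ((m - 1).factorial : ℚ)) := by
    field_simp
    linear_combination h2
  have hF1 : ((fp p (τ * (p * m)) : ℚ))
      = ((τ * (p * m)).factorial : ℚ) / ((p : ℚ) ^ (τ * m) * ((τ * m).factorial : ℚ)) := by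
    rw [eq_div_iff (by exact mul_ne_zero (pne _) (fne _))]
    linear_combination h4
  have hF2 : ((fp p (p * m) : ℚ))
      = ((p * m).factorial : ℚ) / ((p : ℚ) ^ m * (m.factorial : ℚ)) := by
    rw [eq_div_iff (by exact mul_ne_zero (pne _) (fne _))]
    linear_combination h3
  have hF3 : ((fp p ((τ + 1) * (p * m)) : ℚ))
      = (((τ + 1) * (p * m)).factorial : ℚ)
        / ((p : ℚ) ^ ((τ + 1) * m) * (((τ + 1) * m).factorial : ℚ)) := by
    rw [eq_div_iff (by exact mul_ne_zero (pne _) (fne _))]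
    linear_combination h5
  rw [hc1, hc2, hF1, hF2, hF3, ← h8, ← h9, ← h6, ← h7]
  have hmq : ((m : ℚ)) ≠ 0 := Nat.cast_ne_zero.2 hm.ne'
  have hpq : ((p : ℚ)) ≠ 0 := Nat.cast_ne_zero.2 hp0.ne'
  have ht1 : ((τ : ℚ) + 1) ≠ 0 := by positivity
  field_simp
  ring
end

section
/- Let p be a prime, α ≥ 1 an integer, a ≥ 1 an integer with p ∤ a, and set n = p^α · a. Then for every integer τ ≥ 0, p^{2α} divides (−1)^{τn} C((τ+1)n − 1, n − 1) − (−1)^{τ n/p} C((τ+1)·(n/p) − 1, n/p − 1), as integers. -/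
open Finset

/-- Expansion of a product `∏ (s + f j)` when `s * s = 0`. -/
lemma prod_add_of_sq_eq_zero {R : Type*} [CommRing R] (s : R) (hs : s * s = 0)
    (S : Finset ℕ) (f : ℕ → R) :
    ∏ j ∈ S, (s + f j) = ∏ j ∈ S, f j + s * ∑ j ∈ S, ∏ k ∈ S.erase j, f k := by
  classical
  induction S using Finset.induction_on with
  | empty => simp
  | @insert a T haT ih =>
    rw [Finset.prod_insert haT, ih, Finset.prod_insert haT, Finset.sum_insert haT,
      Finset.erase_insert haT]
    have herase : ∀ j ∈ T, ∏ k ∈ (insert a T).erase j, f k = f a * ∏ k ∈ T.erase j, f k := by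
      intro j hj
      have hja : a ≠ j := fun h => haT (h ▸ hj)
      rw [Finset.erase_insert_of_ne hja, Finset.prod_insert (fun h => haT (Finset.mem_of_mem_erase h))]
    rw [Finset.sum_congr rfl herase, ← Finset.mul_sum]
    have : (s + f a) * (∏ j ∈ T, f j + s * ∑ j ∈ T, ∏ k ∈ T.erase j, f k)
        = f a * ∏ j ∈ T, f j + s * (∏ j ∈ T, f j + f a * ∑ j ∈ T, ∏ k ∈ T.erase j, f k)
          + (s * s) * ∑ j ∈ T, ∏ k ∈ T.erase j, f k := by ring
    rw [this, hs]
    ring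

lemma range_asc (c : ℕ) : ∀ k : ℕ, ∏ i ∈ Finset.range k, (c + 1 + i) = (c + 1).ascFactorial k := by
  intro k
  induction k with
  | zero => simp
  | succ k ih => rw [Finset.prod_range_succ, ih, Nat.ascFactorial_succ, mul_comm]

lemma prod_Ioo_add (c N : ℕ) (hN : 1 ≤ N) :
    ∏ j ∈ Finset.Ioo 0 N, (c + j) = (N - 1).factorial * (c + N - 1).choose (N - 1) := by
  have h1 : Finset.Ioo 0 N = Finset.Ico 1 N := by ext j; simp [Finset.mem_Ioo, Finset.mem_Ico]; omega
  rw [h1, Finset.prod_Ico_eq_prod_range]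
  have h2 : ∀ i ∈ Finset.range (N - 1), c + (1 + i) = c + 1 + i := fun i _ => by omega
  rw [Finset.prod_congr rfl h2, range_asc, Nat.ascFactorial_eq_factorial_mul_choose]
  have h3 : c + (N - 1) = c + N - 1 := by omega
  rw [h3]

theorem pow_dvd_signed_choose_sub (p α a n τ : ℕ) (hp : p.Prime) (hα : 1 ≤ α)
    (ha : 1 ≤ a) (hpa : ¬ p ∣ a) (hn : n = p ^ α * a) :
    (p : ℤ) ^ (2 * α) ∣
      (-1 : ℤ) ^ (τ * n) * Nat.choose ((τ + 1) * n - 1) (n - 1)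
        - (-1 : ℤ) ^ (τ * (n / p)) * Nat.choose ((τ + 1) * (n / p) - 1) (n / p - 1) := by
  classical
  set m := p ^ (α - 1) * a with hm
  have hp2 : 2 ≤ p := hp.two_le
  have hα' : α = (α - 1) + 1 := by omega
  have hpow : p ^ α = p * p ^ (α - 1) := by
    nth_rewrite 1 [hα']
    rw [pow_succ]; ring
  have hnm : n = p * m := by
    rw [hn, hpow, hm]; ring
  have hnp : n / p = m := by rw [hnm]; exact Nat.mul_div_cancel_left m hp.pos
  rw [hnp]
  have hm1 : 1 ≤ m := Nat.one_le_iff_ne_zero.mpr (by positivity)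
  have hmn : m < n := by
    rw [hnm]
    calc m = 1 * m := (one_mul m).symm
    _ < p * m := (Nat.mul_lt_mul_right hm1).mpr (by omega)
  have hn1 : 1 ≤ n := le_trans hm1 hmn.le
  have hpn : p ∣ n := by rw [hnm]; exact dvd_mul_right p m
  -- the set of non-multiples of p in (0, n)
  set S : Finset ℕ := (Finset.Ioo 0 n).filter (fun j => ¬ p ∣ j) with hS
  have hmemS : ∀ j, j ∈ S ↔ (0 < j ∧ j < n ∧ ¬ p ∣ j) := by
    intro j; simp [hS, Finset.mem_filter, Finset.mem_Ioo, and_assoc]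
  set W : ℕ := ∏ j ∈ S, j with hW
  set V : ℕ := ∏ j ∈ S, (τ * n + j) with hV
  -- splitting lemma
  have split : ∀ f : ℕ → ℕ, ∏ j ∈ Finset.Ioo 0 n, f j
      = (∏ j ∈ Finset.Ioo 0 m, f (p * j)) * ∏ j ∈ S, f j := by
    intro f
    rw [← Finset.prod_filter_mul_prod_filter_not (Finset.Ioo 0 n) (fun j => p ∣ j) f]
    congr 1
    have himg : (Finset.Ioo 0 n).filter (fun j => p ∣ j) = (Finset.Ioo 0 m).image (fun j => p * j) := by
      ext j
      simp only [Finset.mem_filter, Finset.mem_Ioo, Finset.mem_image]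
      constructor
      · rintro ⟨⟨hj0, hjn⟩, i, rfl⟩
        refine ⟨i, ⟨?_, ?_⟩, rfl⟩
        · exact Nat.pos_of_ne_zero (fun h => by simp [h] at hj0)
        · rw [hnm] at hjn
          exact Nat.lt_of_mul_lt_mul_left hjn
      · rintro ⟨i, ⟨hi0, him⟩, rfl⟩
        refine ⟨⟨by positivity, ?_⟩, dvd_mul_right p i⟩
        rw [hnm]; exact Nat.mul_lt_mul_left hp.pos |>.mpr him
    rw [himg, Finset.prod_image]
    intro x _ y _ h
    exact Nat.eq_of_mul_eq_mul_left hp.pos h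
  -- key numeric identity
  have key : ∀ σ : ℕ, (n - 1).factorial * ((σ + 1) * n - 1).choose (n - 1)
      = p ^ (m - 1) * ((m - 1).factorial * ((σ + 1) * m - 1).choose (m - 1))
        * ∏ j ∈ S, (σ * n + j) := by
    intro σ
    have h1 : ∏ j ∈ Finset.Ioo 0 n, (σ * n + j)
        = (n - 1).factorial * ((σ + 1) * n - 1).choose (n - 1) := by
      rw [prod_Ioo_add _ _ hn1]
      congr 2
      have : (σ + 1) * n = σ * n + n := by ring
      omega
    have h2 : ∀ j : ℕ, σ * n + p * j = p * (σ * m + j) := by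
      intro j; rw [hnm]; ring
    rw [← h1, split (fun j => σ * n + j)]
    have h3 : ∏ j ∈ Finset.Ioo 0 m, (σ * n + p * j) = p ^ (m - 1) * ∏ j ∈ Finset.Ioo 0 m, (σ * m + j) := by
      calc ∏ j ∈ Finset.Ioo 0 m, (σ * n + p * j) = ∏ j ∈ Finset.Ioo 0 m, p * (σ * m + j) := by
            exact Finset.prod_congr rfl fun j _ => h2 j
      _ = (∏ _j ∈ Finset.Ioo 0 m, p) * ∏ j ∈ Finset.Ioo 0 m, (σ * m + j) := Finset.prod_mul_distrib
      _ = p ^ (m - 1) * ∏ j ∈ Finset.Ioo 0 m, (σ * m + j) := by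
            rw [Finset.prod_const, Nat.card_Ioo]
            norm_num
    rw [h3, prod_Ioo_add _ _ hm1]
    have : σ * m + m - 1 = (σ + 1) * m - 1 := by
      have : (σ + 1) * m = σ * m + m := by ring
      omega
    rw [this]
  have key0 : (n - 1).factorial = p ^ (m - 1) * (m - 1).factorial * W := by
    have h := key 0
    have e1 : (0 + 1) * n - 1 = n - 1 := by omega
    have e2 : (0 + 1) * m - 1 = m - 1 := by omega
    rw [e1, e2, Nat.choose_self, Nat.choose_self, mul_one, mul_one] at h
    have e3 : ∀ j ∈ S, 0 * n + j = j := fun j _ => by omega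
    rw [Finset.prod_congr rfl e3] at h
    rw [hW]
    exact h
  set Cn : ℕ := ((τ + 1) * n - 1).choose (n - 1) with hCn
  set Cm : ℕ := ((τ + 1) * m - 1).choose (m - 1) with hCm
  have hCW : Cn * W = Cm * V := by
    have hpos : 0 < p ^ (m - 1) * (m - 1).factorial := by positivity
    apply Nat.eq_of_mul_eq_mul_left hpos
    calc p ^ (m - 1) * (m - 1).factorial * (Cn * W)
        = (n - 1).factorial * Cn := by rw [key0]; ring
      _ = p ^ (m - 1) * ((m - 1).factorial * Cm) * V := key τ
      _ = p ^ (m - 1) * (m - 1).factorial * (Cm * V) := by ring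
  -- now pass to ZMod (p ^ (2 * α))
  set q : ℕ := p ^ (2 * α) with hq
  have hq0 : (q : ℤ) = (p : ℤ) ^ (2 * α) := by push_cast [hq]; ring
  rw [← hq0, ← ZMod.intCast_zmod_eq_zero_iff_dvd]
  push_cast
  set R := ZMod q
  set s : R := ((τ * n : ℕ) : R) with hs
  have hcastzero : ∀ k : ℕ, q ∣ k → ((k : ℕ) : R) = 0 := by
    intro k hk
    exact (ZMod.natCast_eq_zero_iff k q).mpr hk
  have hnn : q ∣ n * n := by
    refine ⟨a * a, ?_⟩
    rw [hn, hq, two_mul, pow_add]; ring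
  have hss : s * s = 0 := by
    rw [hs, ← Nat.cast_mul]
    exact hcastzero _ (dvd_trans hnn ⟨τ * τ, by ring⟩)
  have hsn : s * ((n : ℕ) : R) = 0 := by
    rw [hs, ← Nat.cast_mul]
    exact hcastzero _ (dvd_trans hnn ⟨τ, by ring⟩)
  have hunit : ∀ j : ℕ, ¬ p ∣ j → IsUnit ((j : ℕ) : R) := by
    intro j hj
    rw [ZMod.isUnit_iff_coprime]
    exact Nat.Coprime.pow_right _ ((hp.coprime_iff_not_dvd.mpr hj).symm)
  have hσS : ∀ j ∈ S, n - j ∈ S := by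
    intro j hj
    rw [hmemS] at hj ⊢
    obtain ⟨hj0, hjn, hjp⟩ := hj
    refine ⟨by omega, by omega, fun hd => hjp ?_⟩
    have := Nat.dvd_sub hpn hd
    rwa [Nat.sub_sub_self hjn.le] at this
  set T : R := ∑ j ∈ S, Ring.inverse ((j : ℕ) : R) with hT
  set f : ℕ → R := fun j => s * Ring.inverse ((j : ℕ) : R) with hf
  have pair : ∀ j ∈ S, f j + f (n - j) = 0 := by
    intro j hj
    have hj' := (hmemS j).mp hj
    have hnj' := (hmemS (n - j)).mp (hσS j hj)
    have hu : Ring.inverse ((j : ℕ) : R) * ((j : ℕ) : R) = 1 :=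
      Ring.inverse_mul_cancel _ (hunit j hj'.2.2)
    have hv : Ring.inverse (((n - j : ℕ)) : R) * (((n - j : ℕ)) : R) = 1 :=
      Ring.inverse_mul_cancel _ (hunit (n - j) hnj'.2.2)
    have hadd : (((n - j : ℕ)) : R) + ((j : ℕ) : R) = ((n : ℕ) : R) := by
      rw [← Nat.cast_add]
      congr 1
      omega
    calc f j + f (n - j)
        = s * Ring.inverse ((j : ℕ) : R) * ((((n - j : ℕ)) : R) * Ring.inverse (((n - j : ℕ)) : R))
          + s * (((j : ℕ) : R) * Ring.inverse ((j : ℕ) : R)) * Ring.inverse (((n - j : ℕ)) : R) := by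
          rw [mul_comm (((n - j : ℕ)) : R), hv, mul_comm ((j : ℕ) : R), hu]
          simp [hf]
      _ = (s * ((n : ℕ) : R)) * (Ring.inverse ((j : ℕ) : R) * Ring.inverse (((n - j : ℕ)) : R)) := by
          rw [← hadd]; ring
      _ = 0 := by rw [hsn, zero_mul]
  -- the main congruence for s * T
  have hsT : s * T = (-1 : R) ^ (τ * (n - m)) - 1 := by
    rw [hT, Finset.mul_sum]
    rcases hp.eq_two_or_odd' with hp2' | hodd
    · -- p = 2
      subst hp2'
      have hn2m : n = 2 * m := hnm
      have hzero : ∑ j ∈ S.erase m, f j = 0 := by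
        refine Finset.sum_involution (fun j _ => n - j) ?_ ?_ ?_ ?_
        · intro j hj
          exact pair j (Finset.mem_of_mem_erase hj)
        · intro j hj _
          have hj' := (hmemS j).mp (Finset.mem_of_mem_erase hj)
          have hjm := Finset.ne_of_mem_erase hj
          intro hcon
          have hcon2 : n - j = j := hcon
          exact hjm (by omega)
        · intro j hj
          have hj' := (hmemS j).mp (Finset.mem_of_mem_erase hj)
          have hjm := Finset.ne_of_mem_erase hj
          rw [Finset.mem_erase]
          refine ⟨?_, hσS j (Finset.mem_of_mem_erase hj)⟩
          intro hcon
          have hcon2 : n - j = m := hcon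
          exact hjm (by omega)
        · intro j hj
          have hj' := (hmemS j).mp (Finset.mem_of_mem_erase hj)
          show n - (n - j) = j
          omega
      by_cases hα1 : α = 1
      · -- α = 1 : m = a odd, fixed point m
        have hma : m = a := by rw [hm, hα1]; simp
        have hmS : m ∈ S := by
          rw [hmemS]
          exact ⟨hm1, hmn, by rwa [hma]⟩
        have hsum : ∑ j ∈ S, f j = f m := by
          rw [← Finset.add_sum_erase S f hmS, hzero, add_zero]
        rw [← hf] at hsum ⊢
        rw [hsum]
        have hum : IsUnit ((m : ℕ) : R) := hunit m (by rwa [hma])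
        have hfm : f m = ((2 * τ : ℕ) : R) := by
          apply hum.mul_right_cancel
          rw [hf]
          calc s * Ring.inverse ((m : ℕ) : R) * ((m : ℕ) : R)
              = s * (Ring.inverse ((m : ℕ) : R) * ((m : ℕ) : R)) := by ring
            _ = s := by rw [Ring.inverse_mul_cancel _ hum, mul_one]
            _ = ((2 * τ : ℕ) : R) * ((m : ℕ) : R) := by
                rw [hs, ← Nat.cast_mul]
                congr 1
                rw [hn2m]; ring
        rw [hfm]
        -- now in ZMod (2 ^ (2 * α)), α = 1, q = 4
        have h4 : ((4 : ℕ) : R) = 0 := by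
          apply hcastzero
          rw [hq, hα1]
          norm_num
        have hnma : n - m = a := by omega
        rw [hnma]
        have haodd : Odd a := Nat.odd_iff.mpr (Nat.two_dvd_ne_zero.mp hpa)
        have h4b : (4 : R) = 0 := by exact_mod_cast h4
        rcases Nat.even_or_odd τ with hτ | hτ
        · have hev : Even (τ * a) := hτ.mul_right a
          rw [hev.neg_one_pow]
          obtain ⟨k, hk⟩ := hτ
          have h2τ : (2 * τ : ℕ) = 4 * k := by omega
          rw [h2τ, Nat.cast_mul, h4, zero_mul]
          ring
        · have hodd2 : Odd (τ * a) := hτ.mul haodd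
          rw [hodd2.neg_one_pow]
          obtain ⟨k, hk⟩ := hτ
          have h2τ : (2 * τ : ℕ) = 4 * k + 2 := by omega
          rw [h2τ, Nat.cast_add, Nat.cast_mul, h4, zero_mul, zero_add]
          have h2c : ((2 : ℕ) : R) = (2 : R) := by norm_cast
          rw [h2c]
          linear_combination h4b
      · -- α ≥ 2 : m even, no fixed point
        have hα2 : 2 ≤ α := by omega
        have h2m : 2 ∣ m := by
          rw [hm]
          exact Dvd.dvd.mul_right (dvd_pow_self 2 (by omega : α - 1 ≠ 0)) a
        have hmS : m ∉ S := fun hcon => ((hmemS m).mp hcon).2.2 h2m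
        rw [← hf, ← Finset.erase_eq_of_notMem hmS, hzero]
        have hev : Even (τ * (n - m)) := by
          have : Even (n - m) := by
            obtain ⟨k, hk⟩ := h2m
            exact ⟨k, by omega⟩
          exact this.mul_left τ
        rw [hev.neg_one_pow]
        ring
    · -- p odd
      have hzero : ∑ j ∈ S, f j = 0 := by
        refine Finset.sum_involution (fun j _ => n - j) ?_ ?_ ?_ ?_
        · intro j hj
          exact pair j hj
        · intro j hj _
          have hj' := (hmemS j).mp hj
          intro hcon
          have hcon2 : n - j = j := hcon
          have h2j : n = 2 * j := by omega
          have : p ∣ 2 * j := h2j ▸ hpn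
          rcases (Nat.Prime.dvd_mul hp).mp this with h2 | hj2
          · have := Nat.le_of_dvd (by norm_num) h2
            interval_cases p
            · exact (by decide : ¬ Odd 2) hodd
          · exact hj'.2.2 hj2
        · intro j hj
          exact hσS j hj
        · intro j hj
          have hj' := (hmemS j).mp hj
          show n - (n - j) = j
          omega
      rw [← hf, hzero]
      have hev : Even (τ * (n - m)) := by
        obtain ⟨l, hl⟩ := hodd
        have h2 : n = 2 * (l * m) + m := by rw [hnm, hl]; ring
        have : Even (n - m) := ⟨l * m, by omega⟩
        exact this.mul_left τ
      rw [hev.neg_one_pow]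
      ring
  -- W is a unit mod q
  have hpW : ¬ p ∣ W := by
    rw [hW]
    intro hd
    obtain ⟨j, hj, hdj⟩ := (Prime.dvd_finset_prod_iff hp.prime _).mp hd
    exact ((hmemS j).mp hj).2.2 hdj
  have hWu : IsUnit ((W : ℕ) : R) := hunit W hpW
  -- V ≡ ε W
  have hVW : ((V : ℕ) : R) = ((W : ℕ) : R) * ((-1 : R) ^ (τ * (n - m))) := by
    have hcast : ((V : ℕ) : R) = ∏ j ∈ S, (s + ((j : ℕ) : R)) := by
      rw [hV, Nat.cast_prod]
      refine Finset.prod_congr rfl fun j hj => ?_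
      push_cast [hs]
      congr 1; exact (Nat.cast_mul τ n).symm
    rw [hcast, prod_add_of_sq_eq_zero s hss S (fun j => ((j : ℕ) : R))]
    have hPW : ∀ j ∈ S, ∏ k ∈ S.erase j, ((k : ℕ) : R)
        = Ring.inverse ((j : ℕ) : R) * ∏ k ∈ S, ((k : ℕ) : R) := by
      intro j hj
      have := Finset.mul_prod_erase S (fun k => ((k : ℕ) : R)) hj
      rw [← this, ← mul_assoc, Ring.inverse_mul_cancel _ (hunit j ((hmemS j).mp hj).2.2), one_mul]
    rw [Finset.sum_congr rfl hPW, ← Finset.sum_mul]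
    have hWc : ((W : ℕ) : R) = ∏ k ∈ S, ((k : ℕ) : R) := by rw [hW, Nat.cast_prod]
    rw [← hWc, ← hT]
    calc ((W : ℕ) : R) + s * (T * ((W : ℕ) : R))
        = ((W : ℕ) : R) * (1 + s * T) := by ring
      _ = ((W : ℕ) : R) * ((-1 : R) ^ (τ * (n - m))) := by rw [hsT]; ring
  -- cancel W
  have hC : ((Cn : ℕ) : R) = ((Cm : ℕ) : R) * ((-1 : R) ^ (τ * (n - m))) := by
    apply hWu.mul_right_cancel
    calc ((Cn : ℕ) : R) * ((W : ℕ) : R) = (((Cn * W : ℕ)) : R) := by push_cast; exact (Nat.cast_mul (α := R) Cn W).symm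
      _ = (((Cm * V : ℕ)) : R) := by rw [hCW]
      _ = ((Cm : ℕ) : R) * ((V : ℕ) : R) := by push_cast; exact Nat.cast_mul (α := R) Cm V
      _ = ((Cm : ℕ) : R) * ((-1 : R) ^ (τ * (n - m))) * ((W : ℕ) : R) := by rw [hVW]; ring
  have hexp : (-1 : R) ^ (τ * n) * (-1 : R) ^ (τ * (n - m)) = (-1 : R) ^ (τ * m) := by
    have h1 : τ * n = τ * m + τ * (n - m) := by
      rw [← Nat.mul_add]
      congr 1
      omega
    have hsq : ((-1 : R) ^ (τ * (n - m))) ^ 2 = 1 := by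
      rw [← pow_mul, mul_comm (τ * (n - m)) 2, pow_mul, neg_one_sq, one_pow]
    rw [h1, pow_add]
    linear_combination ((-1 : R) ^ (τ * m)) * hsq
  show (-1 : R) ^ (τ * n) * ((Cn : ℕ) : R) - (-1 : R) ^ (τ * m) * ((Cm : ℕ) : R) = 0
  rw [hC]
  linear_combination ((Cm : ℕ) : R) * hexp
end

section
/- Let p be a prime, m ≥ 1 an integer whose p-adic valuation α = v_p(m) satisfies α ≥ 1, and τ ≥ 0 an integer. Then p^{2α} divides ∑_{d ∣ m} μ(m/d) · (−1)^{dτ} · C(d(τ+1) − 1, d − 1), where the sum is over the positive divisors d of m. -/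
open Finset

lemma split_prod {M : Type*} [CommMonoid M] (p m' : ℕ) (hp : 0 < p) (f : ℕ → M) :
    ∏ j ∈ Ico 1 (p*m'), f j =
      (∏ j ∈ (Ico 1 (p*m')).filter (fun j => ¬ p ∣ j), f j) * ∏ k ∈ Ico 1 m', f (p*k) := by
  rw [← Finset.prod_filter_mul_prod_filter_not (Ico 1 (p*m')) (fun j => p ∣ j) f, mul_comm]
  congr 1
  refine Finset.prod_nbij' (fun j => j / p) (fun k => p * k) ?_ ?_ ?_ ?_ ?_
  · intro a ha
    simp only [mem_filter, mem_Ico] at ha ⊢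
    obtain ⟨⟨h1, h2⟩, c, rfl⟩ := ha
    rw [Nat.mul_div_cancel_left _ hp]
    constructor
    · rcases Nat.eq_zero_or_pos c with rfl | hc; · omega
      exact hc
    · exact lt_of_mul_lt_mul_left h2 (le_of_lt hp)
  · intro a ha
    simp only [mem_filter, mem_Ico] at ha ⊢
    refine ⟨⟨?_, ?_⟩, ⟨a, rfl⟩⟩
    · nlinarith [ha.1, ha.2]
    · exact (Nat.mul_lt_mul_left hp).mpr ha.2
  · intro a ha
    simp only [mem_filter, mem_Ico] at ha
    obtain ⟨-, c, rfl⟩ := ha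
    simp only [Nat.mul_div_cancel_left _ hp]
  · intro a ha; simp only [Nat.mul_div_cancel_left _ hp]
  · intro a ha
    simp only [mem_filter, mem_Ico] at ha
    obtain ⟨-, c, rfl⟩ := ha
    simp only [Nat.mul_div_cancel_left _ hp]

lemma fact_prod (a k : ℕ) : a.factorial * ∏ j ∈ Finset.Ico 1 (k+1), (a + j) = (a + k).factorial := by
  induction k with
  | zero => simp
  | succ k ih =>
    rw [Finset.prod_Ico_succ_top (by omega), ← mul_assoc, ih,
      show a + (k+1) = (a+k) + 1 by ring, Nat.factorial_succ]
    ring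


lemma identA (p m' τ : ℕ) (hp : 0 < p) (hm' : 0 < m') :
    ((((p*m')*(τ+1)-1).choose (p*m'-1) : ℤ)) *
        ∏ j ∈ (Ico 1 (p*m')).filter (fun j => ¬ p ∣ j), (j : ℤ)
      = ((m'*(τ+1)-1).choose (m'-1) : ℤ) *
        ∏ j ∈ (Ico 1 (p*m')).filter (fun j => ¬ p ∣ j), ((p*m'*τ : ℕ) + j : ℤ) := by
  set n := p * m' with hn
  have hn1 : 1 ≤ n := Nat.one_le_iff_ne_zero.mpr (by positivity)
  set S := (Ico 1 n).filter (fun j => ¬ p ∣ j) with hS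
  set A := ((n*(τ+1)-1).choose (n-1)) with hA
  set B := ((m'*(τ+1)-1).choose (m'-1)) with hB
  set X := ∏ j ∈ S, j with hX
  set Y := ∏ j ∈ S, (n*τ + j) with hY
  set Y' := ∏ j ∈ Ico 1 n, (n*τ + j) with hY'
  set W := ∏ k ∈ Ico 1 m', (m'*τ + k) with hW
  set P := p^(m'-1) with hP
  -- fact h3 : X * (P * (m'-1)!) = (n-1)!
  have e1 : Ico 1 ((n-1)+1) = Ico 1 n := by congr 1; omega
  have e2 : Ico 1 ((m'-1)+1) = Ico 1 m' := by congr 1; omega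
  have hmulp : ∏ k ∈ Ico 1 m', (p*k) = p^(m'-1) * (m'-1).factorial := by
    rw [Finset.prod_mul_distrib, Finset.prod_const, Nat.card_Ico]
    congr 1
    rw [← e2, Finset.prod_Ico_id_eq_factorial]
  have h3 : X * (P * (m'-1).factorial) = (n-1).factorial := by
    have hfac : ∏ j ∈ Ico 1 n, j = (n-1).factorial := by
      rw [← e1, Finset.prod_Ico_id_eq_factorial]
    have := split_prod p m' hp (fun j => j)
    rw [← hn, ← hS, hfac, hmulp] at this
    rw [hX, hP]
    exact this.symm
  have h2 : A * (n*τ).factorial * (n-1).factorial = (n*τ + (n-1)).factorial := by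
    have := Nat.add_choose_mul_factorial_mul_factorial (n*τ) (n-1)
    rw [hA, show n*(τ+1)-1 = n*τ + (n-1) by cases n with | zero => omega | succ k => ring_nf; omega]
    linarith [this]
  have h1 : (n*τ).factorial * Y' = (n*τ + (n-1)).factorial := by
    rw [hY', ← e1]; exact fact_prod (n*τ) (n-1)
  have h4 : Y' = Y * (P * W) := by
    have hmul2 : ∏ k ∈ Ico 1 m', (n*τ + p*k) = p^(m'-1) * W := by
      have : ∏ k ∈ Ico 1 m', (n*τ + p*k) = ∏ k ∈ Ico 1 m', (p * (m'*τ + k)) := by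
        apply Finset.prod_congr rfl
        intro k hk
        rw [hn]; ring
      rw [this, Finset.prod_mul_distrib, Finset.prod_const, Nat.card_Ico, hW]
    have := split_prod p m' hp (fun j => n*τ + j)
    rw [← hn, ← hS, hmul2] at this
    rw [hY', hY, this, hP]
  have h5 : (m'*τ).factorial * W = (m'*τ + (m'-1)).factorial := by
    rw [hW, ← e2]; exact fact_prod (m'*τ) (m'-1)
  have h6 : B * (m'*τ).factorial * (m'-1).factorial = (m'*τ + (m'-1)).factorial := by
    have := Nat.add_choose_mul_factorial_mul_factorial (m'*τ) (m'-1)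
    rw [hB, show m'*(τ+1)-1 = m'*τ + (m'-1) by cases m' with | zero => omega | succ k => ring_nf; omega]
    linarith [this]
  -- now pass to ℤ
  have hXc : ∏ j ∈ S, (j : ℤ) = (X : ℤ) := by rw [hX]; push_cast; rfl
  have hYc : ∏ j ∈ S, ((n*τ : ℕ) + j : ℤ) = (Y : ℤ) := by rw [hY]; push_cast; rfl
  rw [hXc, hYc]
  have hK : (P : ℤ) * (m'-1).factorial * (m'*τ).factorial * (n*τ).factorial ≠ 0 := by
    positivity
  apply mul_right_cancel₀ hK
  have h1' : ((n*τ).factorial : ℤ) * Y' = ((n*τ + (n-1)).factorial : ℤ) := by exact_mod_cast h1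
  have h2' : (A : ℤ) * (n*τ).factorial * (n-1).factorial = ((n*τ + (n-1)).factorial : ℤ) := by exact_mod_cast h2
  have h3' : (X : ℤ) * ((P:ℤ) * (m'-1).factorial) = ((n-1).factorial : ℤ) := by exact_mod_cast h3
  have h4' : (Y' : ℤ) = (Y:ℤ) * ((P:ℤ) * (W:ℤ)) := by exact_mod_cast h4
  have h5' : ((m'*τ).factorial : ℤ) * W = ((m'*τ + (m'-1)).factorial : ℤ) := by exact_mod_cast h5
  have h6' : (B : ℤ) * (m'*τ).factorial * (m'-1).factorial = ((m'*τ + (m'-1)).factorial : ℤ) := by exact_mod_cast h6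
  linear_combination ((A:ℤ)*(m'*τ).factorial*(n*τ).factorial) * h3' + ((m'*τ).factorial : ℤ) * h2'
    - ((Y:ℤ)*(P:ℤ)*(n*τ).factorial) * h6' + ((Y:ℤ)*(P:ℤ)*(n*τ).factorial) * h5'
    + (((m'*τ).factorial : ℤ)*((n*τ).factorial : ℤ)) * h4' - ((m'*τ).factorial : ℤ) * h1'

lemma identB (p m' τ β : ℕ) (hp : p.Prime) (hm' : 0 < m') (hβ : 1 ≤ β)
    (hd : p^β ∣ p * m') :
    ((p:ℤ)^(2*β)) ∣
      (∏ j ∈ (Ico 1 (p*m')).filter (fun j => ¬ p ∣ j), ((p*m'*τ : ℕ) + (j:ℤ)))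
      - (-1)^((p*m' + m')*τ) * ∏ j ∈ (Ico 1 (p*m')).filter (fun j => ¬ p ∣ j), (j : ℤ) := by
  have hp1 : 0 < p := hp.pos
  set n := p * m' with hn
  have hpn : p ∣ n := ⟨m', rfl⟩
  have hn1 : 1 ≤ n := Nat.mul_pos hp1 hm'
  set q := p^(2*β) with hq
  haveI : NeZero q := ⟨by positivity⟩
  set S := (Ico 1 n).filter (fun j => ¬ p ∣ j) with hS
  have hqn2 : (q : ℕ) ∣ n^2 := by
    obtain ⟨c, hc⟩ := hd
    exact ⟨c^2, by rw [hc]; ring⟩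
  have hn2 : ((n : ZMod q))^2 = 0 := by
    have : ((n^2 : ℕ) : ZMod q) = 0 := (ZMod.natCast_eq_zero_iff _ _).mpr hqn2
    push_cast at this; exact this
  set S1 := S.filter (fun j => 2*j < n) with hS1
  set T := S.filter (fun j => ¬ 2*j < n) with hT
  set F := T.filter (fun j => 2*j = n) with hF
  set S2 := T.filter (fun j => ¬ 2*j = n) with hS2
  have hmemS : ∀ j, j ∈ S ↔ (1 ≤ j ∧ j < n ∧ ¬ p ∣ j) := by
    intro j; simp [hS, Finset.mem_filter, Finset.mem_Ico, and_assoc]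
  have hmemS1 : ∀ j, j ∈ S1 ↔ ((1 ≤ j ∧ j < n ∧ ¬ p ∣ j) ∧ 2*j < n) := by
    intro j; rw [hS1, Finset.mem_filter, hmemS]
  have hmemS2 : ∀ j, j ∈ S2 ↔ (((1 ≤ j ∧ j < n ∧ ¬ p ∣ j) ∧ ¬ 2*j < n) ∧ ¬ 2*j = n) := by
    intro j; rw [hS2, Finset.mem_filter, hT, Finset.mem_filter, hmemS]
  have hmemF : ∀ j, j ∈ F ↔ (((1 ≤ j ∧ j < n ∧ ¬ p ∣ j) ∧ ¬ 2*j < n) ∧ 2*j = n) := by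
    intro j; rw [hF, Finset.mem_filter, hT, Finset.mem_filter, hmemS]
  have hsplit : ∀ f : ℕ → ZMod q,
      ∏ j ∈ S, f j = (∏ j ∈ S1, f j) * ((∏ j ∈ F, f j) * ∏ j ∈ S2, f j) := by
    intro f
    rw [← Finset.prod_filter_mul_prod_filter_not S (fun j => 2*j < n) f, ← hS1, ← hT,
      ← Finset.prod_filter_mul_prod_filter_not T (fun j => 2*j = n) f, ← hF, ← hS2]
  have hsub : ∀ a, a ∈ S1 → ¬ p ∣ (n - a) := by
    intro a ha hdvd
    rw [hmemS1] at ha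
    have h2 : p ∣ n - (n - a) := Nat.dvd_sub hpn hdvd
    rw [show n - (n - a) = a by omega] at h2
    exact ha.1.2.2 h2
  have hbij : ∀ f : ℕ → ZMod q, ∏ j ∈ S2, f j = ∏ j ∈ S1, f (n - j) := by
    intro f
    refine (Finset.prod_nbij' (fun j => n - j) (fun j => n - j) ?_ ?_ ?_ ?_ ?_).symm
    · intro a ha
      show n - a ∈ S2
      rw [hmemS2]
      have h1 := (hmemS1 a).mp ha
      refine ⟨⟨⟨by omega, by omega, hsub a ha⟩, by omega⟩, by omega⟩
    · intro a ha
      show n - a ∈ S1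
      rw [hmemS1]
      rw [hmemS2] at ha
      have hpa : ¬ p ∣ (n - a) := by
        intro hdvd
        have h2 : p ∣ n - (n - a) := Nat.dvd_sub hpn hdvd
        rw [show n - (n - a) = a by omega] at h2
        exact ha.1.1.2.2 h2
      exact ⟨⟨by omega, by omega, hpa⟩, by omega⟩
    · intro a ha
      have := (hmemS1 a).mp ha
      show n - (n - a) = a
      omega
    · intro a ha
      have := (hmemS2 a).mp ha
      show n - (n - a) = a
      omega
    · intro a ha; rfl
  have hpair : ∀ f g : ℕ → ZMod q, (∀ j ∈ S1, f j * f (n - j) = g j * g (n - j)) →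
      (∀ j ∈ F, f j = g j) → ∏ j ∈ S, f j = ∏ j ∈ S, g j := by
    intro f g hfg hFfg
    rw [hsplit f, hsplit g, hbij f, hbij g, mul_comm (∏ j ∈ F, f j), mul_comm (∏ j ∈ F, g j),
      ← mul_assoc, ← mul_assoc, ← Finset.prod_mul_distrib, ← Finset.prod_mul_distrib]
    rw [Finset.prod_congr rfl hfg, Finset.prod_congr rfl hFfg]
  have hpair' : ∀ (c : ZMod q) (f g : ℕ → ZMod q),
      (∀ j ∈ S1, f j * f (n - j) = g j * g (n - j)) →
      ((∏ j ∈ F, f j) = c * ∏ j ∈ F, g j) → ∏ j ∈ S, f j = c * ∏ j ∈ S, g j := by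
    intro c f g hfg hFfg
    rw [hsplit f, hsplit g, hbij f, hbij g]
    calc (∏ j ∈ S1, f j) * ((∏ j ∈ F, f j) * ∏ j ∈ S1, f (n - j))
        = (∏ j ∈ S1, f j * f (n-j)) * ∏ j ∈ F, f j := by
          rw [Finset.prod_mul_distrib]; ring
      _ = (∏ j ∈ S1, g j * g (n-j)) * (c * ∏ j ∈ F, g j) := by
          rw [Finset.prod_congr rfl hfg, hFfg]
      _ = c * ((∏ j ∈ S1, g j) * ((∏ j ∈ F, g j) * ∏ j ∈ S1, g (n - j))) := by
          rw [Finset.prod_mul_distrib]; ring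
  have hpairing : ∀ j ∈ S1, (((n*τ : ℕ) : ZMod q) + (j:ZMod q)) * (((n*τ : ℕ) : ZMod q) + ((n-j : ℕ):ZMod q))
      = (j : ZMod q) * ((n - j : ℕ) : ZMod q) := by
    intro j hj
    have hjn : j ≤ n := by have := (hmemS1 j).mp hj; omega
    push_cast [Nat.cast_sub hjn]
    linear_combination (((τ:ZMod q))^2 + (τ:ZMod q)) * hn2
  have main : ∏ j ∈ S, (((n*τ : ℕ) : ZMod q) + (j:ZMod q))
      = (-1 : ZMod q)^((n + m')*τ) * ∏ j ∈ S, (j : ZMod q) := by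
    by_cases hcase : p = 2 ∧ ¬ 2 ∣ m'
    · obtain ⟨hp2, hm2⟩ := hcase
      subst hp2
      have hβ1 : β = 1 := by
        by_contra h
        have h2 : 2 ≤ β := by omega
        have h4 : 2^2 ∣ 2*m' := dvd_trans (pow_dvd_pow 2 h2) hd
        omega
      have hqq : q = 4 := by rw [hq, hβ1]; norm_num
      have hF1 : F = {m'} := by
        apply Finset.ext; intro j
        rw [hmemF, Finset.mem_singleton]
        constructor
        · intro h; omega
        · intro h; subst h
          refine ⟨⟨⟨by omega, by omega, hm2⟩, by omega⟩, by omega⟩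
      apply hpair' _ _ _ hpairing
      rw [hF1, Finset.prod_singleton, Finset.prod_singleton]
      have hzz : ((((n*τ : ℕ) : ℤ) + (m':ℤ) - (-1)^((n + m')*τ) * (m':ℤ) : ℤ) : ZMod q) = 0 := by
        rw [ZMod.intCast_zmod_eq_zero_iff_dvd, hqq]
        have hncast : (n : ℤ) = 2 * m' := by exact_mod_cast congrArg (Nat.cast : ℕ → ℤ) hn
        rcases Nat.even_or_odd τ with ⟨t, ht⟩ | ⟨t, ht⟩
        · subst ht
          have hev : Even ((n + m') * (t + t)) := ⟨(n+m')*t, by ring⟩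
          rw [hev.neg_one_pow]
          refine ⟨(m':ℤ) * t, ?_⟩
          push_cast
          rw [hncast]; ring
        · subst ht
          have hod : Odd ((n + m') * (2*t + 1)) := by
            refine Odd.mul ?_ ⟨t, rfl⟩
            rw [Nat.odd_iff]
            omega
          rw [hod.neg_one_pow]
          refine ⟨(m':ℤ) * (t + 1), ?_⟩
          push_cast
          rw [hncast]; ring
      push_cast at hzz
      rw [sub_eq_zero] at hzz
      push_cast
      exact hzz
    · have hF0 : F = ∅ := by
        apply Finset.eq_empty_of_forall_notMem
        intro j hj
        rw [hmemF] at hj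
        obtain ⟨⟨⟨hj1, hj2, hj3⟩, -⟩, hj4⟩ := hj
        by_cases hp2 : p = 2
        · subst hp2
          have : 2 ∣ m' := by
            by_contra hc; exact hcase ⟨rfl, hc⟩
          omega
        · have hpd : p ∣ 2 * j := ⟨m', by omega⟩
          rcases (Nat.Prime.dvd_mul hp).mp hpd with h | h
          · exact hp2 ((Nat.prime_dvd_prime_iff_eq hp Nat.prime_two).mp h)
          · exact hj3 h
      have hev : Even ((n + m') * τ) := by
        rcases Nat.even_or_odd p with hpe | hpo
        · have hp2 : p = 2 := ((Nat.Prime.even_iff hp).mp hpe)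
          subst hp2
          have h2m : 2 ∣ m' := by
            by_contra hc; exact hcase ⟨rfl, hc⟩
          obtain ⟨s, hs⟩ := h2m
          exact ⟨(3*s)*τ, by rw [hn, hs]; ring⟩
        · obtain ⟨s, hs⟩ := hpo
          exact ⟨(m'*(s+1))*τ, by rw [hn, hs]; ring⟩
      rw [hev.neg_one_pow, one_mul]
      have := hpair' 1 (fun j => ((n*τ : ℕ) : ZMod q) + (j : ZMod q)) (fun j => (j : ZMod q))
        hpairing (by rw [hF0]; simp)
      simpa using this
  -- conclusion
  have hqc : ((p:ℤ))^(2*β) = ((q:ℕ):ℤ) := by rw [hq]; push_cast; ring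
  rw [hqc, ← ZMod.intCast_zmod_eq_zero_iff_dvd]
  push_cast
  rw [sub_eq_zero]
  push_cast at main
  exact main

lemma keylem (p m' τ β : ℕ) (hp : p.Prime) (hm' : 0 < m') (hβ : 1 ≤ β) (hd : p^β ∣ p*m') :
    (p:ℤ)^(2*β) ∣ (-1)^((p*m')*τ) * (((p*m')*(τ+1)-1).choose (p*m'-1) : ℤ)
      - (-1)^(m'*τ) * ((m'*(τ+1)-1).choose (m'-1) : ℤ) := by
  set n := p * m' with hn
  set S := (Ico 1 n).filter (fun j => ¬ p ∣ j) with hS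
  set Pi := ∏ j ∈ S, (j : ℤ) with hPi
  have hcop : IsCoprime ((p:ℤ)^(2*β)) Pi := by
    have h1 : Nat.Coprime (p^(2*β)) (∏ j ∈ S, j) := by
      apply Nat.Coprime.pow_left
      apply Nat.Coprime.prod_right
      intro j hj
      have : ¬ p ∣ j := by
        rw [hS, Finset.mem_filter] at hj
        exact hj.2
      exact (Nat.Prime.coprime_iff_not_dvd hp).mpr this
    have h2 : IsCoprime ((p^(2*β) : ℕ) : ℤ) ((∏ j ∈ S, j : ℕ) : ℤ) :=
      Nat.isCoprime_iff_coprime.mpr h1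
    have e1 : ((p^(2*β) : ℕ) : ℤ) = (p:ℤ)^(2*β) := by push_cast; ring
    have e2 : ((∏ j ∈ S, j : ℕ) : ℤ) = Pi := by rw [hPi]; push_cast; rfl
    rwa [e1, e2] at h2
  have hA := identA p m' τ hp.pos hm'
  have hB := identB p m' τ β hp hm' hβ hd
  rw [← hn, ← hS, ← hPi] at hA hB
  set s : ℤ := (-1)^(n*τ) with hs
  have hss : s * s = 1 := by
    rw [hs, ← pow_add]
    exact Even.neg_one_pow ⟨n*τ, rfl⟩
  have hsign : s * (-1:ℤ)^((n + m')*τ) = (-1)^(m'*τ) := by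
    rw [hs, ← pow_add]
    have : n*τ + (n + m')*τ = 2*(n*τ) + m'*τ := by ring
    rw [this, pow_add, pow_mul]
    norm_num
  have hmul : (s * (((n)*(τ+1)-1).choose (n-1) : ℤ)
      - (-1)^(m'*τ) * ((m'*(τ+1)-1).choose (m'-1) : ℤ)) * Pi
      = s * (((m'*(τ+1)-1).choose (m'-1) : ℤ) *
        ((∏ j ∈ S, ((n*τ : ℕ) + (j:ℤ))) - (-1)^((n + m')*τ) * Pi)) := by
    linear_combination s * hA + (((m'*(τ+1)-1).choose (m'-1) : ℤ) * Pi) * hsign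
  have hdvd : (p:ℤ)^(2*β) ∣ (s * (((n)*(τ+1)-1).choose (n-1) : ℤ)
      - (-1)^(m'*τ) * ((m'*(τ+1)-1).choose (m'-1) : ℤ)) * Pi := by
    rw [hmul, ← mul_assoc]
    exact Dvd.dvd.mul_left hB _
  exact hcop.dvd_of_dvd_mul_right hdvd

theorem pow_padic_dvd_moebius_sum (p m τ : ℕ) (hp : p.Prime) (hm : 1 ≤ m)
    (hα : 1 ≤ padicValNat p m) :
    (p : ℤ) ^ (2 * padicValNat p m) ∣
      ∑ d ∈ m.divisors, (ArithmeticFunction.moebius (m / d)) *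
        (-1 : ℤ) ^ (d * τ) * Nat.choose (d * (τ + 1) - 1) (d - 1) := by
  have hm0 : m ≠ 0 := by omega
  set α := padicValNat p m with hαdef
  have hfα : m.factorization p = α := Nat.factorization_def m hp
  set g : ℕ → ℤ := fun d => (-1:ℤ)^(d*τ) * ((d*(τ+1)-1).choose (d-1) : ℤ) with hg
  set t : ℕ → ℤ := fun d => (ArithmeticFunction.moebius (m/d) : ℤ) * g d with ht
  have step0 : ∑ d ∈ m.divisors, (ArithmeticFunction.moebius (m / d)) *
      (-1 : ℤ) ^ (d * τ) * Nat.choose (d * (τ + 1) - 1) (d - 1) = ∑ d ∈ m.divisors, t d := by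
    apply Finset.sum_congr rfl
    intro d hd
    rw [ht, hg]
    ring
  rw [step0]
  -- basic p-adic facts
  have hpα_dvd : p^α ∣ m := (Nat.Prime.pow_dvd_iff_le_factorization hp hm0).mpr (le_of_eq hfα.symm)
  have hnot : ¬ p^(α+1) ∣ m := by
    rw [Nat.Prime.pow_dvd_iff_le_factorization hp hm0, hfα]
    omega
  -- the zero terms
  have hzero : ∀ d ∈ m.divisors, ¬ p^(α-1) ∣ d → t d = 0 := by
    intro d hd hnd
    rw [Nat.mem_divisors] at hd
    obtain ⟨⟨c, hc⟩, -⟩ := hd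
    have hd0 : d ≠ 0 := by rintro rfl; simp at hc; omega
    have hc0 : c ≠ 0 := by rintro rfl; simp at hc; omega
    have hmd : m / d = c := by rw [hc, Nat.mul_div_cancel_left _ (Nat.pos_of_ne_zero hd0)]
    have hμ : ArithmeticFunction.moebius c = 0 := by
      by_contra hne
      have hsf : Squarefree c := ArithmeticFunction.moebius_ne_zero_iff_squarefree.mp hne
      have hc2 : ¬ p * p ∣ c := Nat.squarefree_iff_prime_squarefree.mp hsf p hp
      have hcfac : c.factorization p ≤ 1 := by
        by_contra hle
        exact hc2 (by
          have : p^2 ∣ c := (Nat.Prime.pow_dvd_iff_le_factorization hp hc0).mpr (by omega)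
          rwa [pow_two] at this)
      have hdfac : α - 1 ≤ d.factorization p := by
        have h2 : m.factorization p = d.factorization p + c.factorization p := by
          rw [hc, Nat.factorization_mul hd0 hc0]
          simp
        omega
      exact hnd ((Nat.Prime.pow_dvd_iff_le_factorization hp hd0).mpr hdfac)
    simp only [ht, hmd, hμ]
    simp
  -- split the sum
  set A := m.divisors.filter (fun d => p^α ∣ d) with hA
  set notA := m.divisors.filter (fun d => ¬ p^α ∣ d) with hnotA
  set B := notA.filter (fun d => p^(α-1) ∣ d) with hB
  have hsum1 : ∑ d ∈ m.divisors, t d = ∑ d ∈ A, t d + ∑ d ∈ notA, t d :=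
    (Finset.sum_filter_add_sum_filter_not m.divisors _ t).symm
  have hsum2 : ∑ d ∈ notA, t d = ∑ d ∈ B, t d := by
    rw [← Finset.sum_filter_add_sum_filter_not notA (fun d => p^(α-1) ∣ d) t, ← hB]
    have h0 : ∑ d ∈ notA.filter (fun d => ¬ p^(α-1) ∣ d), t d = 0 := by
      apply Finset.sum_eq_zero
      intro d hd
      rw [Finset.mem_filter] at hd
      exact hzero d (Finset.mem_filter.mp hd.1).1 hd.2
    rw [h0, add_zero]
  have hpow1 : p^α = p * p^(α-1) := by
    rw [← pow_succ']
    congr 1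
    omega
  have hmemB : ∀ d, d ∈ B ↔ (d ∣ m ∧ ¬ p^α ∣ d ∧ p^(α-1) ∣ d) := by
    intro d
    rw [hB, Finset.mem_filter, hnotA, Finset.mem_filter, Nat.mem_divisors]
    tauto
  have hmemA : ∀ d, d ∈ A ↔ (d ∣ m ∧ p^α ∣ d) := by
    intro d
    rw [hA, Finset.mem_filter, Nat.mem_divisors]
    tauto
  have hmem1 : ∀ d ∈ B, p * d ∈ A := by
    intro d hd
    rw [hmemB] at hd
    obtain ⟨hdm, hnα, hα1⟩ := hd
    rw [hmemA]
    constructor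
    · obtain ⟨c, hc⟩ := hdm
      have hd0 : d ≠ 0 := by rintro rfl; simp at hc; omega
      have hc0 : c ≠ 0 := by rintro rfl; simp at hc; omega
      have hpc : p ∣ c := by
        by_contra hpc
        have hcop : (p^α).Coprime c := ((hp.coprime_iff_not_dvd).mpr hpc).pow_left _
        have : p^α ∣ d * c := by rw [← hc]; exact hpα_dvd
        exact hnα (hcop.dvd_of_dvd_mul_right this)
      obtain ⟨c', rfl⟩ := hpc
      exact ⟨c', by rw [hc]; ring⟩
    · rw [hpow1]
      exact mul_dvd_mul_left p hα1
  have hmem2 : ∀ e ∈ A, e / p ∈ B := by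
    intro e he
    rw [hmemA] at he
    obtain ⟨hem, hpe⟩ := he
    have hpde : p ∣ e := dvd_trans (dvd_pow_self p (by omega : α ≠ 0)) hpe
    have hepe : p * (e / p) = e := Nat.mul_div_cancel' hpde
    rw [hmemB]
    refine ⟨dvd_trans (Nat.div_dvd_of_dvd hpde) hem, ?_, ?_⟩
    · intro hcon
      apply hnot
      have : p^(α+1) ∣ p * (e/p) := by
        rw [pow_succ']
        exact mul_dvd_mul_left p hcon
      rw [hepe] at this
      exact dvd_trans this hem
    · have : p * p^(α-1) ∣ p * (e/p) := by rw [← hpow1, hepe]; exact hpe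
      exact (mul_dvd_mul_iff_left (Nat.pos_of_ne_zero hp.pos.ne').ne').mp this
  have hBA : ∑ d ∈ B, t d = ∑ e ∈ A, (-(ArithmeticFunction.moebius (m/e) * g (e/p))) := by
    refine Finset.sum_nbij' (fun d => p * d) (fun e => e / p) hmem1 hmem2 ?_ ?_ ?_
    · intro d hd
      exact Nat.mul_div_cancel_left d hp.pos
    · intro e he
      rw [hmemA] at he
      exact Nat.mul_div_cancel' (dvd_trans (dvd_pow_self p (by omega : α ≠ 0)) he.2)
    · intro d hd
      have hpdA := hmem1 d hd
      rw [hmemA] at hpdA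
      rw [hmemB] at hd
      obtain ⟨hdm, hnα, hα1⟩ := hd
      have hd0 : d ≠ 0 := by
        rintro rfl
        exact hnα (dvd_zero _)
      have hpdm : p * d ∣ m := hpdA.1
      set c := m / (p * d) with hc
      have hmc : (p * d) * c = m := Nat.mul_div_cancel' hpdm
      have hpc : ¬ p ∣ c := by
        intro hpc
        apply hnot
        obtain ⟨d', hd'⟩ := hα1
        obtain ⟨c', hc'⟩ := hpc
        refine ⟨d' * c', ?_⟩
        rw [← hmc, hd', hc', show α + 1 = (α-1) + 2 by omega, pow_add]
        ring
      have hmd : m / d = p * c := by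
        rw [← hmc, show p * d * c = d * (p * c) by ring,
          Nat.mul_div_cancel_left _ (Nat.pos_of_ne_zero hd0)]
      have hμ : ArithmeticFunction.moebius (p * c) =
          ArithmeticFunction.moebius p * ArithmeticFunction.moebius c :=
        ArithmeticFunction.isMultiplicative_moebius.map_mul_of_coprime
          ((hp.coprime_iff_not_dvd).mpr hpc)
      simp only [ht]
      rw [Nat.mul_div_cancel_left d hp.pos, hmd, hμ, ArithmeticFunction.moebius_apply_prime hp]
      ring
  rw [hsum1, hsum2, hBA, ← Finset.sum_add_distrib]
  apply Finset.dvd_sum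
  intro d hd
  rw [hmemA] at hd
  obtain ⟨hdm, hpαd⟩ := hd
  have hd0 : d ≠ 0 := by
    rintro rfl
    exact absurd (Nat.eq_zero_of_zero_dvd (hdm)) hm0
  have hpd : p ∣ d := dvd_trans (dvd_pow_self p (by omega : α ≠ 0)) hpαd
  have hpm' : p * (d / p) = d := Nat.mul_div_cancel' hpd
  have hm'0 : 0 < d / p := Nat.div_pos (Nat.le_of_dvd (Nat.pos_of_ne_zero hd0) hpd) hp.pos
  have hkey := keylem p (d/p) τ α hp hm'0 hα (by rw [hpm']; exact hpαd)
  rw [hpm'] at hkey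
  have : t d + -(ArithmeticFunction.moebius (m/d) * g (d/p)) =
      (ArithmeticFunction.moebius (m/d) : ℤ) * (g d - g (d/p)) := by
    simp only [ht]; ring
  rw [this]
  apply Dvd.dvd.mul_left
  simp only [hg]
  exact hkey
end
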